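/- Let A : Ω_A → L(H) be a non-vanishing observable (A(j) ≠ 0 for all j ∈ Ω_A) on a finite-dimensional complex Hilbert space with finite outcome set Ω_A. Then A is minimally sufficient if and only if every stochastic matrix p = (p(i|j))_{i,j∈Ω_A} satisfying A^p = A (that is, ∑_{j∈Ω_A} p(i|j) A(j) = A(i) for all i ∈ Ω_A) has p(i|j) = δ_{ij} for all i, j ∈ Ω_A. -/

import Mathlib

open scoped ComplexOrder

noncomputable section

/-- A positive semidefinite operator on a finite-dimensional complex Hilbert space. -/
def IsPosOp {E : Type*} [NormedAddCommGroup E] [InnerProductSpace ℂ E]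
    [FiniteDimensional ℂ E] (T : E →ₗ[ℂ] E) : Prop :=
  LinearMap.adjoint T = T ∧ ∀ x : E, 0 ≤ (inner ℂ (T x) x : ℂ)

/-- An orthogonal projection: a self-adjoint idempotent operator. -/
def IsOrthoProj {E : Type*} [NormedAddCommGroup E] [InnerProductSpace ℂ E]
    [FiniteDimensional ℂ E] (P : E →ₗ[ℂ] E) : Prop :=
  LinearMap.adjoint P = P ∧ P ∘ₗ P = P

/-- A discrete observable (POVM) with finite outcome set `Ω`. -/
def IsPOVM {E : Type*} [NormedAddCommGroup E] [InnerProductSpace ℂ E]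
    [FiniteDimensional ℂ E] {Ω : Type*} [Fintype Ω] (A : Ω → E →ₗ[ℂ] E) : Prop :=
  (∀ j, IsPosOp (A j)) ∧ ∑ j, A j = (1 : E →ₗ[ℂ] E)

/-- A projection-valued measure (PVM). -/
def IsPVM {E : Type*} [NormedAddCommGroup E] [InnerProductSpace ℂ E]
    [FiniteDimensional ℂ E] {Ω : Type*} [Fintype Ω] (P : Ω → E →ₗ[ℂ] E) : Prop :=
  (∀ j, IsOrthoProj (P j)) ∧ ∑ j, P j = (1 : E →ₗ[ℂ] E)

/-- An isometry between inner product spaces: `J* J = 1`. -/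
def IsIsometryOp {E F : Type*} [NormedAddCommGroup E] [InnerProductSpace ℂ E]
    [FiniteDimensional ℂ E] [NormedAddCommGroup F] [InnerProductSpace ℂ F]
    [FiniteDimensional ℂ F] (J : E →ₗ[ℂ] F) : Prop :=
  LinearMap.adjoint J ∘ₗ J = (1 : E →ₗ[ℂ] E)

/-- `(F, P, J)` is a Naimark dilation of the observable `A`. -/
def IsNaimark {E F : Type*} [NormedAddCommGroup E] [InnerProductSpace ℂ E]
    [FiniteDimensional ℂ E] [NormedAddCommGroup F] [InnerProductSpace ℂ F]
    [FiniteDimensional ℂ F] {Ω : Type*} [Fintype Ω]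
    (A : Ω → E →ₗ[ℂ] E) (P : Ω → F →ₗ[ℂ] F) (J : E →ₗ[ℂ] F) : Prop :=
  IsPVM P ∧ IsIsometryOp J ∧ ∀ j, A j = LinearMap.adjoint J ∘ₗ P j ∘ₗ J

/-- A minimal Naimark dilation: the vectors `P j (J φ)` span the dilation space. -/
def IsMinimalNaimark {E F : Type*} [NormedAddCommGroup E] [InnerProductSpace ℂ E]
    [FiniteDimensional ℂ E] [NormedAddCommGroup F] [InnerProductSpace ℂ F]
    [FiniteDimensional ℂ F] {Ω : Type*} [Fintype Ω]
    (A : Ω → E →ₗ[ℂ] E) (P : Ω → F →ₗ[ℂ] F) (J : E →ₗ[ℂ] F) : Prop :=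
  IsNaimark A P J ∧ Submodule.span ℂ {x : F | ∃ j φ, x = P j (J φ)} = ⊤

/-- The sandwich map `σ ↦ U ∘ σ ∘ V` as a linear map on operators. -/
def sandwich {E F : Type*} [NormedAddCommGroup E] [InnerProductSpace ℂ E]
    [NormedAddCommGroup F] [InnerProductSpace ℂ F]
    (U : E →ₗ[ℂ] F) (V : F →ₗ[ℂ] E) : (E →ₗ[ℂ] E) →ₗ[ℂ] (F →ₗ[ℂ] F) where
  toFun σ := U ∘ₗ σ ∘ₗ V
  map_add' σ τ := by
    ext x; simp [LinearMap.add_comp, LinearMap.comp_add]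
  map_smul' c σ := by
    ext x; simp

/-- The least disturbing channel `ρ ↦ ∑ j, P j J ρ J* P j` associated with
a Naimark dilation `(F, P, J)`. -/
def leastDisturbing {E F : Type*} [NormedAddCommGroup E] [InnerProductSpace ℂ E]
    [FiniteDimensional ℂ E] [NormedAddCommGroup F] [InnerProductSpace ℂ F]
    [FiniteDimensional ℂ F] {Ω : Type*} [Fintype Ω]
    (P : Ω → F →ₗ[ℂ] F) (J : E →ₗ[ℂ] F) : (E →ₗ[ℂ] E) →ₗ[ℂ] (F →ₗ[ℂ] F) :=
  ∑ j, sandwich (P j ∘ₗ J) (LinearMap.adjoint J ∘ₗ P j)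

/-- The Lüders channel `σ ↦ ∑ j, P j σ P j` of a PVM `P`. -/
def ludersChannel {F : Type*} [NormedAddCommGroup F] [InnerProductSpace ℂ F]
    {Ω : Type*} [Fintype Ω] (P : Ω → F →ₗ[ℂ] F) : (F →ₗ[ℂ] F) →ₗ[ℂ] (F →ₗ[ℂ] F) :=
  ∑ j, sandwich (P j) (P j)

/-- Complete positivity of a map on operators, expressed through the existence of
a Kraus decomposition (equivalent to complete positivity in finite dimension). -/
def IsCPMap {E F : Type*} [NormedAddCommGroup E] [InnerProductSpace ℂ E]
    [FiniteDimensional ℂ E] [NormedAddCommGroup F] [InnerProductSpace ℂ F]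
    [FiniteDimensional ℂ F] (Λ : (E →ₗ[ℂ] E) →ₗ[ℂ] (F →ₗ[ℂ] F)) : Prop :=
  ∃ (n : ℕ) (V : Fin n → (E →ₗ[ℂ] F)),
    ∀ ρ, Λ ρ = ∑ i, V i ∘ₗ ρ ∘ₗ LinearMap.adjoint (V i)

/-- A quantum channel: a completely positive trace-preserving linear map. -/
def IsChannel {E F : Type*} [NormedAddCommGroup E] [InnerProductSpace ℂ E]
    [FiniteDimensional ℂ E] [NormedAddCommGroup F] [InnerProductSpace ℂ F]
    [FiniteDimensional ℂ F] (Λ : (E →ₗ[ℂ] E) →ₗ[ℂ] (F →ₗ[ℂ] F)) : Prop :=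
  IsCPMap Λ ∧ ∀ ρ, LinearMap.trace ℂ F (Λ ρ) = LinearMap.trace ℂ E ρ

/-- `Λd` is the Heisenberg dual of `Λ`: `tr[Λ(ρ) B] = tr[ρ Λd(B)]` for all `ρ, B`. -/
def IsHeisenbergDual {E F : Type*} [NormedAddCommGroup E] [InnerProductSpace ℂ E]
    [FiniteDimensional ℂ E] [NormedAddCommGroup F] [InnerProductSpace ℂ F]
    [FiniteDimensional ℂ F] (Λ : (E →ₗ[ℂ] E) →ₗ[ℂ] (F →ₗ[ℂ] F))
    (Λd : (F →ₗ[ℂ] F) →ₗ[ℂ] (E →ₗ[ℂ] E)) : Prop :=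
  ∀ ρ B, LinearMap.trace ℂ F (Λ ρ ∘ₗ B) = LinearMap.trace ℂ E (ρ ∘ₗ Λd B)

/-- Channel post-processing: `Λ₀ ⪯ Λ` iff `Λ₀ = Γ ∘ Λ` for some channel `Γ`. -/
def ChanPP {E F G : Type*} [NormedAddCommGroup E] [InnerProductSpace ℂ E]
    [FiniteDimensional ℂ E] [NormedAddCommGroup F] [InnerProductSpace ℂ F]
    [FiniteDimensional ℂ F] [NormedAddCommGroup G] [InnerProductSpace ℂ G]
    [FiniteDimensional ℂ G]
    (Λ₀ : (E →ₗ[ℂ] E) →ₗ[ℂ] (G →ₗ[ℂ] G)) (Λ : (E →ₗ[ℂ] E) →ₗ[ℂ] (F →ₗ[ℂ] F)) : Prop :=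
  ∃ Γ : (F →ₗ[ℂ] F) →ₗ[ℂ] (G →ₗ[ℂ] G), IsChannel Γ ∧ Λ₀ = Γ ∘ₗ Λ

/-- Post-processing equivalence of channels. -/
def ChanEquiv {E F G : Type*} [NormedAddCommGroup E] [InnerProductSpace ℂ E]
    [FiniteDimensional ℂ E] [NormedAddCommGroup F] [InnerProductSpace ℂ F]
    [FiniteDimensional ℂ F] [NormedAddCommGroup G] [InnerProductSpace ℂ G]
    [FiniteDimensional ℂ G]
    (Λ₀ : (E →ₗ[ℂ] E) →ₗ[ℂ] (G →ₗ[ℂ] G)) (Λ : (E →ₗ[ℂ] E) →ₗ[ℂ] (F →ₗ[ℂ] F)) : Prop :=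
  ChanPP Λ₀ Λ ∧ ChanPP Λ Λ₀

/-- Observable post-processing: `B ⪯ A` via a stochastic matrix `p`. -/
def ObsPP {E : Type*} [NormedAddCommGroup E] [InnerProductSpace ℂ E]
    [FiniteDimensional ℂ E] {Ω₁ Ω₂ : Type*} [Fintype Ω₁] [Fintype Ω₂]
    (B : Ω₂ → E →ₗ[ℂ] E) (A : Ω₁ → E →ₗ[ℂ] E) : Prop :=
  ∃ p : Ω₂ → Ω₁ → ℝ, (∀ k j, 0 ≤ p k j) ∧ (∀ j, ∑ k, p k j = 1) ∧
    ∀ k, B k = ∑ j, (p k j : ℂ) • A j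

/-- Post-processing equivalence of observables. -/
def ObsEquiv {E : Type*} [NormedAddCommGroup E] [InnerProductSpace ℂ E]
    [FiniteDimensional ℂ E] {Ω₁ Ω₂ : Type*} [Fintype Ω₁] [Fintype Ω₂]
    (B : Ω₂ → E →ₗ[ℂ] E) (A : Ω₁ → E →ₗ[ℂ] E) : Prop :=
  ObsPP B A ∧ ObsPP A B

/-- `B` is a relabeling of `A` (along some function `f` on outcomes). -/
def IsRelabeling {E : Type*} [NormedAddCommGroup E] [InnerProductSpace ℂ E]
    [FiniteDimensional ℂ E] {Ω₁ Ω₂ : Type*} [Fintype Ω₁] [Fintype Ω₂] [DecidableEq Ω₂]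
    (B : Ω₂ → E →ₗ[ℂ] E) (A : Ω₁ → E →ₗ[ℂ] E) : Prop :=
  ∃ f : Ω₁ → Ω₂, ∀ k, B k = ∑ j ∈ Finset.univ.filter (fun j => f j = k), A j

/-- A minimally sufficient observable: every observable post-processing
equivalent to it is a refinement of it (i.e. it is a relabeling of every such observable). -/
def MinSufficient {E : Type*} [NormedAddCommGroup E] [InnerProductSpace ℂ E]
    [FiniteDimensional ℂ E] {Ω : Type*} [Fintype Ω] [DecidableEq Ω]
    (A : Ω → E →ₗ[ℂ] E) : Prop :=
  ∀ (Ω' : Type) (_ : Fintype Ω') (B : Ω' → E →ₗ[ℂ] E),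
    IsPOVM B → ObsEquiv B A → IsRelabeling A B

/-- Compatibility of an observable `A` and a channel `Λ`: there is an instrument
with the outcome statistics of `A` whose total channel is `Λ`. -/
def CompatObsChan {E F : Type*} [NormedAddCommGroup E] [InnerProductSpace ℂ E]
    [FiniteDimensional ℂ E] [NormedAddCommGroup F] [InnerProductSpace ℂ F]
    [FiniteDimensional ℂ F] {Ω : Type*} [Fintype Ω]
    (A : Ω → E →ₗ[ℂ] E) (Λ : (E →ₗ[ℂ] E) →ₗ[ℂ] (F →ₗ[ℂ] F)) : Prop :=
  ∃ I : Ω → ((E →ₗ[ℂ] E) →ₗ[ℂ] (F →ₗ[ℂ] F)),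
    (∀ j, IsCPMap (I j)) ∧
    (∀ j ρ, LinearMap.trace ℂ F (I j ρ) = LinearMap.trace ℂ E (ρ ∘ₗ A j)) ∧
    ∑ j, I j = Λ

/-- Joint measurability (compatibility) of two observables. -/
def JointlyMeasurable {E : Type*} [NormedAddCommGroup E] [InnerProductSpace ℂ E]
    [FiniteDimensional ℂ E] {Ω₁ Ω₂ : Type*} [Fintype Ω₁] [Fintype Ω₂]
    (A : Ω₁ → E →ₗ[ℂ] E) (B : Ω₂ → E →ₗ[ℂ] E) : Prop :=
  ∃ G : Ω₁ × Ω₂ → E →ₗ[ℂ] E, IsPOVM G ∧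
    (∀ j, A j = ∑ k, G (j, k)) ∧ (∀ k, B k = ∑ j, G (j, k))

/-- An extreme observable: an extreme point of the convex set of observables
with the given outcome set. -/
def IsExtremeObs {E : Type*} [NormedAddCommGroup E] [InnerProductSpace ℂ E]
    [FiniteDimensional ℂ E] {Ω : Type*} [Fintype Ω] (A : Ω → E →ₗ[ℂ] E) : Prop :=
  IsPOVM A ∧ ∀ (B₁ B₂ : Ω → E →ₗ[ℂ] E) (t : ℝ), IsPOVM B₁ → IsPOVM B₂ →
    0 < t → t < 1 → (∀ j, A j = (t : ℂ) • B₁ j + ((1 - t : ℝ) : ℂ) • B₂ j) →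
    (B₁ = A ∧ B₂ = A)

/-- `|x⟩⟨y|` : the rank-one operator `z ↦ ⟨y, z⟩ x`. -/
def outer {E : Type*} [NormedAddCommGroup E] [InnerProductSpace ℂ E] (x y : E) :
    E →ₗ[ℂ] E where
  toFun z := (inner ℂ y z : ℂ) • x
  map_add' z w := by simp [inner_add_right, add_smul]
  map_smul' c z := by simp [inner_smul_right, smul_smul]

/-- Loewner order on operators: `S ≤ T` iff `T - S` is positive semidefinite. -/
def LoewnerLE {E : Type*} [NormedAddCommGroup E] [InnerProductSpace ℂ E]
    [FiniteDimensional ℂ E] (S T : E →ₗ[ℂ] E) : Prop :=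
  IsPosOp (T - S)

/-- Compression of an operator `T` on `F` to a subspace `S`: `P_S ∘ T ∘ incl_S`. -/
def compressTo {F : Type*} [NormedAddCommGroup F] [InnerProductSpace ℂ F]
    [FiniteDimensional ℂ F] (S : Submodule ℂ F) (T : F →ₗ[ℂ] F) : ↥S →ₗ[ℂ] ↥S :=
  have := FiniteDimensional.complete ℂ ↥S
  S.orthogonalProjectionOnto.toLinearMap ∘ₗ T ∘ₗ S.subtype

end

open Finset

namespace Stmt9

variable {Ω : Type*} [Fintype Ω]

/-- entrywise matrix product -/
def mulM (X Y : Ω → Ω → ℝ) : Ω → Ω → ℝ := fun i j => ∑ k, X i k * Y k j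

/-- column-stochastic -/
def Stoch (X : Ω → Ω → ℝ) : Prop := (∀ i j, 0 ≤ X i j) ∧ ∀ j, ∑ i, X i j = 1

theorem Stoch.le_one {X : Ω → Ω → ℝ} (h : Stoch X) (i j : Ω) : X i j ≤ 1 := by
  have := Finset.single_le_sum (f := fun k => X k j) (fun k _ => h.1 k j) (mem_univ i)
  rw [h.2 j] at this; exact this

theorem Stoch.mul {X Y : Ω → Ω → ℝ} (hX : Stoch X) (hY : Stoch Y) : Stoch (mulM X Y) := by
  constructor
  · intro i j
    exact Finset.sum_nonneg fun k _ => mul_nonneg (hX.1 i k) (hY.1 k j)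
  · intro j
    show ∑ i, ∑ k, X i k * Y k j = 1
    rw [Finset.sum_comm]
    calc ∑ k, ∑ i, X i k * Y k j = ∑ k, (∑ i, X i k) * Y k j := by
            simp [Finset.sum_mul]
      _ = ∑ k, Y k j := by simp [hX.2]
      _ = 1 := hY.2 j

theorem mulM_assoc (X Y Z : Ω → Ω → ℝ) : mulM (mulM X Y) Z = mulM X (mulM Y Z) := by
  funext i j
  simp only [mulM, Finset.sum_mul, Finset.mul_sum]
  rw [Finset.sum_comm]
  simp [mul_assoc]

def powM (X : Ω → Ω → ℝ) : ℕ → (Ω → Ω → ℝ)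
  | 0 => X
  | n+1 => mulM (powM X n) X

theorem Stoch.powM {X : Ω → Ω → ℝ} (h : Stoch X) (n : ℕ) : Stoch (powM X n) := by
  induction n with
  | zero => exact h
  | succ n ih => exact ih.mul h

/-- Cesàro average of the first `N+1` powers -/
noncomputable def ces (X : Ω → Ω → ℝ) (N : ℕ) : Ω → Ω → ℝ :=
  fun i j => ((N : ℝ)+1)⁻¹ * ∑ n ∈ range (N+1), powM X n i j

theorem ces_mem_Icc {X : Ω → Ω → ℝ} (h : Stoch X) (N : ℕ) (i j : Ω) :
    ces X N i j ∈ Set.Icc (0:ℝ) 1 := by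
  have h1 : (0:ℝ) < (N:ℝ)+1 := by positivity
  constructor
  · exact mul_nonneg (by positivity) (Finset.sum_nonneg fun n _ => (h.powM n).1 i j)
  · have : ∑ n ∈ range (N+1), powM X n i j ≤ ∑ n ∈ range (N+1), 1 :=
      Finset.sum_le_sum fun n _ => (h.powM n).le_one i j
    simp only [Finset.sum_const, card_range, nsmul_eq_mul, mul_one] at this
    show ((N : ℝ)+1)⁻¹ * ∑ n ∈ range (N+1), powM X n i j ≤ 1
    rw [inv_mul_le_iff₀ h1, mul_one]
    exact this.trans (by push_cast; linarith)

theorem ces_colsum {X : Ω → Ω → ℝ} (h : Stoch X) (N : ℕ) (j : Ω) :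
    ∑ i, ces X N i j = 1 := by
  have h1 : ((N:ℝ)+1) ≠ 0 := by positivity
  simp only [ces, ← Finset.mul_sum]
  rw [Finset.sum_comm]
  have : ∀ n ∈ range (N+1), ∑ i, powM X n i j = 1 := fun n _ => (h.powM n).2 j
  rw [Finset.sum_congr rfl this]
  simp [inv_mul_cancel₀ h1]

section Fixes
variable {H : Type*} [NormedAddCommGroup H] [InnerProductSpace ℂ H]
variable {Ω : Type*} [Fintype Ω]

/-- `A` is fixed by post-processing with `X` -/
def Fixes (A : Ω → H →ₗ[ℂ] H) (X : Ω → Ω → ℝ) : Prop :=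
  ∀ i, A i = ∑ j, (X i j : ℂ) • A j

theorem Fixes.mul {A : Ω → H →ₗ[ℂ] H} {X Y : Ω → Ω → ℝ}
    (hX : Fixes A X) (hY : Fixes A Y) : Fixes A (mulM X Y) := by
  intro i
  calc A i = ∑ k, (X i k : ℂ) • A k := hX i
    _ = ∑ k, (X i k : ℂ) • ∑ j, (Y k j : ℂ) • A j := by
        refine Finset.sum_congr rfl fun k _ => ?_
        rw [← hY k]
    _ = ∑ k, ∑ j, ((X i k : ℂ) * (Y k j : ℂ)) • A j := by
        simp only [Finset.smul_sum, smul_smul]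
    _ = ∑ j, ∑ k, ((X i k : ℂ) * (Y k j : ℂ)) • A j := Finset.sum_comm
    _ = ∑ j, ((mulM X Y i j : ℝ) : ℂ) • A j := by
        refine Finset.sum_congr rfl fun j _ => ?_
        rw [← Finset.sum_smul]
        push_cast [mulM]
        ring_nf
end Fixes

section Fixes2
variable {H : Type*} [NormedAddCommGroup H] [InnerProductSpace ℂ H]
variable {Ω : Type*} [Fintype Ω]
variable {A : Ω → H →ₗ[ℂ] H} {X : Ω → Ω → ℝ}

theorem Fixes.powM (hX : Fixes A X) (n : ℕ) : Fixes A (Stmt9.powM X n) := by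
  induction n with
  | zero => exact hX
  | succ n ih => exact ih.mul hX

theorem Fixes.ces (hX : Fixes A X) (N : ℕ) : Fixes A (Stmt9.ces X N) := by
  intro i
  have h1 : ((N:ℝ)+1) ≠ 0 := by positivity
  refine Eq.symm ?_
  calc ∑ j, ((Stmt9.ces X N i j : ℝ) : ℂ) • A j
      = ∑ j, (((N:ℝ)+1)⁻¹ : ℂ) • ∑ n ∈ Finset.range (N+1), ((Stmt9.powM X n i j : ℝ):ℂ) • A j := by
        refine Finset.sum_congr rfl fun j _ => ?_
        rw [Finset.smul_sum]
        simp only [smul_smul]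
        rw [Stmt9.ces, ← Finset.sum_smul]
        push_cast [Finset.mul_sum]
        ring_nf
    _ = (((N:ℝ)+1)⁻¹ : ℂ) • ∑ n ∈ Finset.range (N+1), ∑ j, ((Stmt9.powM X n i j : ℝ):ℂ) • A j := by
        rw [← Finset.smul_sum, Finset.sum_comm]
    _ = (((N:ℝ)+1)⁻¹ : ℂ) • ∑ n ∈ Finset.range (N+1), A i := by
        rw [Finset.sum_congr rfl fun n _ => (hX.powM n i).symm]
    _ = A i := by
        rw [Finset.sum_const, Finset.card_range, ← Nat.cast_smul_eq_nsmul ℂ, smul_smul]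
        push_cast
        rw [inv_mul_cancel₀ (by exact_mod_cast (Complex.ofReal_ne_zero.2 h1)), one_smul]

end Fixes2

section Cesaro
open Filter Topology
variable {H : Type*} [NormedAddCommGroup H] [InnerProductSpace ℂ H]
variable {Ω : Type*} [Fintype Ω]

theorem exists_idem (A : Ω → H →ₗ[ℂ] H) (X : Ω → Ω → ℝ) (hst : Stoch X) (hfix : Fixes A X) :
    ∃ E : Ω → Ω → ℝ, Stoch E ∧ Fixes A E ∧ mulM E E = E ∧ mulM E X = E := by
  classical
  set K : Set (Ω → Ω → ℝ) := Set.univ.pi fun _ => Set.univ.pi fun _ => Set.Icc (0:ℝ) 1 with hKdef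
  have hK : IsCompact K := isCompact_univ_pi fun _ => isCompact_univ_pi fun _ => isCompact_Icc
  have hmem : ∀ N, ces X N ∈ K := by
    intro N
    simp only [hKdef, Set.mem_pi, Set.mem_univ, forall_true_left]
    exact fun i j => ces_mem_Icc hst N i j
  obtain ⟨E, hEK, φ, hφ, hlim⟩ := hK.tendsto_subseq hmem
  have tE : ∀ i j, Tendsto (fun t => ces X (φ t) i j) atTop (𝓝 (E i j)) := by
    intro i j
    exact ((((continuous_apply j).comp (continuous_apply i)).tendsto E).comp hlim)
  have hnonneg : ∀ i j, 0 ≤ E i j := by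
    intro i j
    exact ge_of_tendsto' (tE i j) fun t => (ces_mem_Icc hst (φ t) i j).1
  have hcol : ∀ j, ∑ i, E i j = 1 := by
    intro j
    have h1 : Tendsto (fun t => ∑ i, ces X (φ t) i j) atTop (𝓝 (∑ i, E i j)) :=
      tendsto_finset_sum _ fun i _ => tE i j
    have h2 : (fun t => ∑ i, ces X (φ t) i j) = fun _ => (1:ℝ) := by
      funext t; exact ces_colsum hst (φ t) j
    rw [h2] at h1
    exact tendsto_nhds_unique h1 (tendsto_const_nhds (f := atTop (α := ℕ)))
  have hfixE : Fixes A E := by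
    intro i
    ext x
    have hconst : ∀ t : ℕ, ∑ j, ((ces X (φ t) i j : ℝ) : ℂ) • A j x = A i x := by
      intro t
      have h := congrArg (fun T : H →ₗ[ℂ] H => T x) ((hfix.ces (φ t)) i)
      simpa using h.symm
    have hT : Tendsto (fun t => ∑ j, ((ces X (φ t) i j : ℝ) : ℂ) • A j x) atTop
        (𝓝 (∑ j, ((E i j : ℝ) : ℂ) • A j x)) := by
      refine tendsto_finset_sum _ fun j _ => ?_
      exact ((Complex.continuous_ofReal.tendsto _).comp (tE i j)).smul_const (A j x)
    have h2 : (fun t => ∑ j, ((ces X (φ t) i j : ℝ) : ℂ) • A j x) = fun _ => A i x := by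
      funext t; exact hconst t
    rw [h2] at hT
    have := tendsto_nhds_unique hT (tendsto_const_nhds (f := atTop (α := ℕ)))
    simpa using this.symm
  have habs : ∀ N i j, |powM X (N+1) i j - powM X 0 i j| ≤ 1 := by
    intro N i j
    have h1 := (hst.powM (N+1)).1 i j
    have h2 := (hst.powM (N+1)).le_one i j
    have h3 := (hst.powM 0).1 i j
    have h4 := (hst.powM 0).le_one i j
    rw [abs_le]; constructor <;> linarith
  have hcesX : ∀ N i j, mulM (ces X N) X i j
      = ces X N i j + ((N:ℝ)+1)⁻¹ * (powM X (N+1) i j - powM X 0 i j) := by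
    intro N i j
    have key : mulM (ces X N) X i j = ((N:ℝ)+1)⁻¹ * ∑ n ∈ Finset.range (N+1), powM X (n+1) i j := by
      simp only [mulM, ces, Finset.sum_mul, Finset.mul_sum]
      rw [Finset.sum_comm]
      refine Finset.sum_congr rfl fun n _ => ?_
      have : powM X (n+1) i j = ∑ k, powM X n i k * X k j := rfl
      rw [this, Finset.mul_sum]
      exact Finset.sum_congr rfl fun k _ => by ring
    have tele : ∑ n ∈ Finset.range (N+1), powM X (n+1) i j
        = ∑ n ∈ Finset.range (N+1), powM X n i j + (powM X (N+1) i j - powM X 0 i j) := by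
      have h := Finset.sum_range_succ' (fun n => powM X n i j) (N+1)
      have h2 := Finset.sum_range_succ (fun n => powM X n i j) (N+1)
      rw [h2] at h
      linarith
    rw [key, tele, mul_add, ces]
  have hEX : mulM E X = E := by
    funext i j
    have hT1 : Tendsto (fun t => mulM (ces X (φ t)) X i j) atTop (𝓝 (mulM E X i j)) := by
      refine tendsto_finset_sum _ fun k _ => ?_
      exact (tE i k).mul_const (X k j)
    have hT2 : Tendsto (fun t => mulM (ces X (φ t)) X i j) atTop (𝓝 (E i j + 0)) := by
      have hb : Tendsto (fun t : ℕ =>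
          ((φ t : ℝ)+1)⁻¹ * (powM X (φ t + 1) i j - powM X 0 i j)) atTop (𝓝 0) := by
        apply squeeze_zero_norm (t₀ := atTop) (a := fun t : ℕ => ((t:ℝ)+1)⁻¹)
        · intro t
          have h1 : (0:ℝ) < (t:ℝ)+1 := by positivity
          have h2 : (0:ℝ) < (φ t:ℝ)+1 := by positivity
          have hle : ((φ t : ℝ)+1)⁻¹ ≤ ((t:ℝ)+1)⁻¹ := by
            apply inv_anti₀ h1
            have ht : t ≤ φ t := hφ.le_apply
            push_cast
            have : (t:ℝ) ≤ (φ t : ℝ) := by exact_mod_cast ht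
            linarith
          calc ‖((φ t : ℝ)+1)⁻¹ * (powM X (φ t + 1) i j - powM X 0 i j)‖
              = ((φ t : ℝ)+1)⁻¹ * |powM X (φ t + 1) i j - powM X 0 i j| := by
                rw [Real.norm_eq_abs, abs_mul, abs_of_pos (by positivity)]
            _ ≤ ((φ t : ℝ)+1)⁻¹ * 1 := by
                exact mul_le_mul_of_nonneg_left (habs (φ t) i j) (le_of_lt (by positivity))
            _ ≤ ((t:ℝ)+1)⁻¹ := by rw [mul_one]; exact hle
        · have := tendsto_one_div_add_atTop_nhds_zero_nat (𝕜 := ℝ)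
          simpa [one_div] using this
      have := (tE i j).add hb
      refine this.congr fun t => ?_
      exact (hcesX (φ t) i j).symm
    rw [add_zero] at hT2
    exact tendsto_nhds_unique hT1 hT2
  have hEpow : ∀ n, mulM E (powM X n) = E := by
    intro n
    induction n with
    | zero => exact hEX
    | succ n ih =>
        show mulM E (mulM (powM X n) X) = E
        rw [← mulM_assoc, ih, hEX]
  have hECes : ∀ N, mulM E (ces X N) = E := by
    intro N
    funext i j
    have h1 : ((N:ℝ)+1) ≠ 0 := by positivity
    calc mulM E (ces X N) i j
        = ((N:ℝ)+1)⁻¹ * ∑ n ∈ Finset.range (N+1), mulM E (powM X n) i j := by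
          simp only [mulM, ces, Finset.mul_sum]
          rw [Finset.sum_comm]
          exact Finset.sum_congr rfl fun n _ => Finset.sum_congr rfl fun k _ => by ring
      _ = ((N:ℝ)+1)⁻¹ * ∑ n ∈ Finset.range (N+1), E i j := by
          rw [Finset.sum_congr rfl fun n _ => by rw [hEpow n]]
      _ = E i j := by
          rw [Finset.sum_const, Finset.card_range, nsmul_eq_mul]
          push_cast
          field_simp
  have hEE : mulM E E = E := by
    funext i j
    have hT1 : Tendsto (fun t => mulM E (ces X (φ t)) i j) atTop (𝓝 (mulM E E i j)) := by
      refine tendsto_finset_sum _ fun k _ => ?_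
      exact (tE k j).const_mul (E i k)
    have h2 : (fun t => mulM E (ces X (φ t)) i j) = fun _ => E i j := by
      funext t; rw [hECes (φ t)]
    rw [h2] at hT1
    exact tendsto_nhds_unique hT1 (tendsto_const_nhds (f := atTop (α := ℕ)))
  exact ⟨E, ⟨hnonneg, hcol⟩, hfixE, hEE, hEX⟩


end Cesaro


section Structure
variable {Ω : Type*} [Fintype Ω] {E : Ω → Ω → ℝ}

theorem subL (hst : Stoch E) (hid : mulM E E = E) {i s : Ω}
    (hmax : ∀ k, E i k ≤ E i s) {k : Ω} (hk : 0 < E k s) : E i k = E i s := by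
  by_contra hne
  have hlt : E i k < E i s := lt_of_le_of_ne (hmax k) hne
  have heq : ∑ m, E i m * E m s = E i s := by
    conv_rhs => rw [← hid]
    rfl
  have hstrict : ∑ m, E i m * E m s < ∑ m, E i s * E m s := by
    apply Finset.sum_lt_sum
    · exact fun m _ => mul_le_mul_of_nonneg_right (hmax m) (hst.1 m s)
    · exact ⟨k, Finset.mem_univ k, mul_lt_mul_of_pos_right hlt hk⟩
  rw [← Finset.mul_sum, hst.2 s, mul_one, heq] at hstrict
  exact lt_irrefl _ hstrict

theorem diagMax (hst : Stoch E) (hid : mulM E E = E) (hrow : ∀ i, ∃ k, 0 < E i k) (i : Ω) :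
    0 < E i i ∧ ∀ k, E i k ≤ E i i := by
  obtain ⟨js, _, hjs⟩ := Finset.exists_max_image Finset.univ (E i) ⟨i, Finset.mem_univ i⟩
  have hmax : ∀ k, E i k ≤ E i js := fun k => hjs k (Finset.mem_univ k)
  obtain ⟨k0, hk0⟩ := hrow i
  have hpos : 0 < E i js := lt_of_lt_of_le hk0 (hmax k0)
  have hii : E i i = E i js := subL hst hid hmax hpos
  exact ⟨by rw [hii]; exact hpos, fun k => by rw [hii]; exact hmax k⟩

theorem Esymm (hst : Stoch E) (hid : mulM E E = E) (hrow : ∀ i, ∃ k, 0 < E i k)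
    {i j : Ω} (h : 0 < E i j) : 0 < E j i := by
  have hd := diagMax hst hid hrow j
  have := subL hst hid (i := j) (s := j) hd.2 (k := i) h
  rw [this]; exact hd.1

theorem Eval (hst : Stoch E) (hid : mulM E E = E) (hrow : ∀ i, ∃ k, 0 < E i k)
    {i j : Ω} (h : 0 < E i j) : E i j = E i i := by
  have hji : 0 < E j i := Esymm hst hid hrow h
  exact subL hst hid (i := i) (s := i) (diagMax hst hid hrow i).2 (k := j) hji

theorem Etrans (hst : Stoch E) (hid : mulM E E = E)
    {i j k : Ω} (h1 : 0 < E i j) (h2 : 0 < E j k) : 0 < E i k := by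
  have heq : E i k = ∑ m, E i m * E m k := (congrFun (congrFun hid i) k).symm
  rw [heq]
  have hterm : 0 < E i j * E j k := mul_pos h1 h2
  have h3 : E i j * E j k ≤ ∑ m, E i m * E m k := Finset.single_le_sum
    (f := fun m => E i m * E m k)
    (fun m _ => mul_nonneg (hst.1 i m) (hst.1 m k)) (Finset.mem_univ j)
  linarith

open Classical in
theorem Ecolsum (hst : Stoch E) (hid : mulM E E = E) (hrow : ∀ i, ∃ k, 0 < E i k) (j : Ω) :
    ∑ i ∈ Finset.univ.filter (fun i => 0 < E i j), E i i = 1 := by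
  classical
  have h1 : ∑ i, E i j = 1 := hst.2 j
  rw [← Finset.sum_filter_add_sum_filter_not Finset.univ (fun i => 0 < E i j)] at h1
  have h2 : ∑ i ∈ Finset.univ.filter (fun i => ¬ 0 < E i j), E i j = 0 :=
    Finset.sum_eq_zero fun i hi => by
      have := Finset.mem_filter.1 hi
      exact le_antisymm (not_lt.1 this.2) (hst.1 i j)
  rw [h2, add_zero] at h1
  rw [← h1]
  exact Finset.sum_congr rfl fun i hi =>
    (Eval hst hid hrow ((Finset.mem_filter.1 hi).2)).symm

end Structure


section MainLemmas
open Finset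
variable {H : Type*} [NormedAddCommGroup H] [InnerProductSpace ℂ H] [FiniteDimensional ℂ H]
variable {Ω : Type*} [Fintype Ω] [DecidableEq Ω]

theorem minSuff_of_id (A : Ω → H →ₗ[ℂ] H)
    (hid : ∀ p : Ω → Ω → ℝ, (∀ i j, 0 ≤ p i j) → (∀ j, ∑ i, p i j = 1) →
      (∀ i, A i = ∑ j, (p i j : ℂ) • A j) →
      ∀ i j, p i j = if i = j then 1 else 0) :
    MinSufficient A := by
  intro Ω' instΩ' B hB hequiv
  obtain ⟨⟨p, hp0, hp1, hpB⟩, ⟨q, hq0, hq1, hqA⟩⟩ := hequiv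
  classical
  set r : Ω → Ω → ℝ := fun i j => ∑ k, q i k * p k j with hrdef
  have hr0 : ∀ i j, 0 ≤ r i j := fun i j =>
    Finset.sum_nonneg fun k _ => mul_nonneg (hq0 i k) (hp0 k j)
  have hr1 : ∀ j, ∑ i, r i j = 1 := by
    intro j
    rw [hrdef]
    rw [Finset.sum_comm]
    calc ∑ k, ∑ i, q i k * p k j = ∑ k, (∑ i, q i k) * p k j := by simp [Finset.sum_mul]
      _ = ∑ k, p k j := by simp [hq1]
      _ = 1 := hp1 j
  have hrfix : ∀ i, A i = ∑ j, (r i j : ℂ) • A j := by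
    intro i
    calc A i = ∑ k, (q i k : ℂ) • B k := hqA i
      _ = ∑ k, (q i k : ℂ) • ∑ j, (p k j : ℂ) • A j := by
          refine Finset.sum_congr rfl fun k _ => ?_; rw [← hpB k]
      _ = ∑ k, ∑ j, ((q i k : ℂ) * (p k j : ℂ)) • A j := by
          simp only [Finset.smul_sum, smul_smul]
      _ = ∑ j, ∑ k, ((q i k : ℂ) * (p k j : ℂ)) • A j := Finset.sum_comm
      _ = ∑ j, (r i j : ℂ) • A j := by
          refine Finset.sum_congr rfl fun j _ => ?_
          rw [← Finset.sum_smul, hrdef]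
          push_cast
          ring_nf
  have hrid := hid r hr0 hr1 hrfix
  have hex : ∀ k : Ω', ∃ i, 0 < q i k := by
    intro k
    by_contra hcon
    push_neg at hcon
    have : ∑ i, q i k = 0 :=
      Finset.sum_eq_zero fun i _ => le_antisymm (hcon i) (hq0 i k)
    rw [hq1 k] at this
    norm_num at this
  choose f hf using hex
  have key : ∀ (i : Ω) (k : Ω'), (q i k : ℂ) • B k = if f k = i then B k else 0 := by
    intro i k
    by_cases hBk : B k = 0
    · simp [hBk]
    · have hpj : ∃ j, 0 < p k j := by
        by_contra hcon
        push_neg at hcon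
        have : B k = 0 := by
          rw [hpB k]
          refine Finset.sum_eq_zero fun j _ => ?_
          have : p k j = 0 := le_antisymm (hcon j) (hp0 k j)
          simp [this]
        exact hBk this
      obtain ⟨j, hpkj⟩ := hpj
      have hqz : ∀ i', i' ≠ j → q i' k = 0 := by
        intro i' hne
        have hrz : r i' j = 0 := by rw [hrid i' j, if_neg hne]
        have := (Finset.sum_eq_zero_iff_of_nonneg
          (fun k' _ => mul_nonneg (hq0 i' k') (hp0 k' j))).1 hrz k (Finset.mem_univ k)
        rcases mul_eq_zero.1 this with h | h
        · exact h
        · exact absurd h (ne_of_gt hpkj)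
      have hfkj : f k = j := by
        by_contra hne
        exact absurd (hqz (f k) hne) (ne_of_gt (hf k))
      have hqj1 : q j k = 1 := by
        have hs : ∑ i', q i' k = q j k :=
          Finset.sum_eq_single_of_mem j (Finset.mem_univ j) fun b _ hb => hqz b hb
        rw [hq1 k] at hs
        exact hs.symm
      by_cases hik : i = j
      · subst hik
        rw [hqj1, if_pos hfkj]
        simp
      · rw [hqz i (by exact hik), if_neg (by rw [hfkj]; exact fun h => hik h.symm)]
        simp
  refine ⟨f, fun i => ?_⟩
  calc A i = ∑ k, (q i k : ℂ) • B k := hqA i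
    _ = ∑ k, if f k = i then B k else 0 := Finset.sum_congr rfl fun k _ => key i k
    _ = ∑ k ∈ Finset.univ.filter (fun k => f k = i), B k := by
        rw [Finset.sum_filter]

theorem id_of_minSuff (A : Ω → H →ₗ[ℂ] H) (hA : IsPOVM A) (hnv : ∀ j, A j ≠ 0)
    (hms : MinSufficient A) (p : Ω → Ω → ℝ) (hp0 : ∀ i j, 0 ≤ p i j)
    (hp1 : ∀ j, ∑ i, p i j = 1) (hfix : ∀ i, A i = ∑ j, (p i j : ℂ) • A j) :
    ∀ i j, p i j = if i = j then 1 else 0 := by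
  classical
  set idm : Ω → Ω → ℝ := fun i j => if i = j then 1 else 0 with hidmdef
  suffices hpid : p = idm by intro i j; rw [hpid]
  by_contra hne
  obtain ⟨E, hEst, hEfix, hEE, hEX⟩ := exists_idem A p ⟨hp0, hp1⟩ hfix
  have hidm_mul : mulM idm p = p := by
    funext i j
    simp only [mulM, hidmdef, ite_mul, one_mul, zero_mul]
    rw [Finset.sum_ite_eq]
    simp
  have hEne : E ≠ idm := by
    intro h
    apply hne
    calc p = mulM idm p := hidm_mul.symm
      _ = mulM E p := by rw [h]
      _ = E := hEX
      _ = idm := h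
  have hrow : ∀ i, ∃ k, 0 < E i k := by
    intro i
    by_contra hcon
    push_neg at hcon
    have hz : ∀ k, E i k = 0 := fun k => le_antisymm (hcon k) (hEst.1 i k)
    apply hnv i
    rw [hEfix i]
    refine Finset.sum_eq_zero fun j _ => ?_
    simp [hz j]
  have hoff : ∃ i j, i ≠ j ∧ 0 < E i j := by
    by_contra hcon
    push_neg at hcon
    apply hEne
    funext i j
    by_cases hij : i = j
    · subst hij
      have hdiag : ∑ k, E k i = 1 := hEst.2 i
      have : ∑ k, E k i = E i i :=
        Finset.sum_eq_single_of_mem i (Finset.mem_univ i)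
          (fun b _ hb => le_antisymm (hcon b i hb) (hEst.1 b i))
      rw [this] at hdiag
      simp [hidmdef, hdiag]
    · have : E i j = 0 := le_antisymm (hcon i j hij) (hEst.1 i j)
      simp [hidmdef, this, hij]
  obtain ⟨i₀, j₀, hne0, hpos0⟩ := hoff
  -- the equivalence relation
  have hrefl : ∀ i, 0 < E i i := fun i => (diagMax hEst hEE hrow i).1
  have hsym : ∀ {i j}, 0 < E i j → 0 < E j i := fun h => Esymm hEst hEE hrow h
  have htrans : ∀ {i j k}, 0 < E i j → 0 < E j k → 0 < E i k :=
    fun h1 h2 => Etrans hEst hEE h1 h2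
  let st : Setoid Ω := ⟨fun i j => 0 < E i j, ⟨fun i => hrefl i, hsym, htrans⟩⟩
  let rep : Ω → Ω := fun i => Quotient.out (Quotient.mk st i)
  have hrep_rel : ∀ i, 0 < E (rep i) i := fun i =>
    Quotient.exact (Quotient.out_eq (Quotient.mk st i))
  have hrep_eq : ∀ {i j}, 0 < E i j → rep i = rep j := fun h =>
    congrArg Quotient.out (Quotient.sound (a := _) (b := _) h)
  have hrel_of : ∀ {i j}, rep i = rep j → 0 < E i j := by
    intro i j h
    have h1 : 0 < E (rep i) i := hrep_rel i
    have h2 : 0 < E (rep j) j := hrep_rel j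
    rw [h] at h1
    exact htrans (hsym h1) h2
  -- counting
  set T : Finset Ω := Finset.univ.image rep with hTdef
  have hTcard : T.card < Fintype.card Ω := by
    rcases lt_or_eq_of_le (Finset.card_image_le (s := Finset.univ) (f := rep)) with h | h
    · simpa using h
    · exfalso
      have hinj := Finset.injOn_of_card_image_eq (by rw [h])
      exact hne0 (hinj (Finset.mem_coe.2 (Finset.mem_univ i₀))
        (Finset.mem_coe.2 (Finset.mem_univ j₀)) (hrep_eq hpos0))
  set n : ℕ := Fintype.card ↥T with hndef
  have hnT : n = T.card := Fintype.card_coe T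
  let e : ↥T ≃ Fin n := Fintype.equivFin ↥T
  have hrepT : ∀ j, rep j ∈ T := fun j => Finset.mem_image_of_mem rep (Finset.mem_univ j)
  let g : Ω → Fin n := fun j => e ⟨rep j, hrepT j⟩
  have hrep_idem : ∀ i, rep (rep i) = rep i := fun i => hrep_eq (hrep_rel i)
  have hgg : ∀ j k, g j = g k ↔ 0 < E j k := by
    intro j k
    constructor
    · intro h
      have h2 := congrArg Subtype.val (e.injective h)
      exact hrel_of h2
    · intro h
      show e _ = e _
      exact congrArg e (Subtype.ext (hrep_eq h))
  -- the merged observable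
  set B : Fin n → H →ₗ[ℂ] H :=
    fun c => ∑ j ∈ Finset.univ.filter (fun j => g j = c), A j with hBdef
  have hBpos : ∀ c, IsPosOp (B c) := by
    intro c
    constructor
    · rw [hBdef]
      rw [map_sum]
      exact Finset.sum_congr rfl fun j _ => (hA.1 j).1
    · intro x
      rw [hBdef]
      simp only [LinearMap.coe_sum, Finset.sum_apply]
      rw [sum_inner]
      exact Finset.sum_nonneg fun j _ => (hA.1 j).2 x
  have hBsum : ∑ c, B c = 1 := by
    rw [hBdef, ← hA.2]
    exact Finset.sum_fiberwise Finset.univ g A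
  -- B ⪯ A
  have hPPBA : ObsPP B A := by
    refine ⟨fun c j => if g j = c then 1 else 0, fun c j => by positivity, fun j => ?_, fun c => ?_⟩
    · simp [Finset.sum_ite_eq]
    · simp only [hBdef]
      rw [Finset.sum_filter]
      refine Finset.sum_congr rfl fun j _ => ?_
      by_cases h : g j = c <;> simp [h]
  -- A ⪯ B
  have hgsec : ∀ c : Fin n, ∃ j₁, g j₁ = c := by
    intro c
    obtain ⟨x, hx⟩ := e.surjective c
    obtain ⟨j₂, _, hj₂⟩ := Finset.mem_image.1 x.2
    refine ⟨(x : Ω), ?_⟩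
    show e ⟨rep (x : Ω), _⟩ = c
    have : rep (x : Ω) = (x : Ω) := by
      conv_lhs => rw [← hj₂]
      rw [hrep_idem, hj₂]
    rw [← hx]
    exact congrArg e (Subtype.ext this)
  have hPPAB : ObsPP A B := by
    refine ⟨fun j c => if g j = c then E j j else 0, ?_, ?_, ?_⟩
    · intro j c
      by_cases h : g j = c
      · simp [h, le_of_lt (hrefl j)]
      · simp [h]
    · intro c
      obtain ⟨j₁, hj₁⟩ := hgsec c
      have hsets : Finset.univ.filter (fun j => g j = c)
          = Finset.univ.filter (fun j => 0 < E j j₁) := by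
        refine Finset.filter_congr fun j _ => ?_
        rw [← hj₁, hgg]
      calc ∑ j, (if g j = c then E j j else 0)
          = ∑ j ∈ Finset.univ.filter (fun j => g j = c), E j j := by
            rw [Finset.sum_filter]
        _ = ∑ j ∈ Finset.univ.filter (fun j => 0 < E j j₁), E j j := by rw [hsets]
        _ = 1 := Ecolsum hEst hEE hrow j₁
    · intro j
      have step1 : ∑ c, ((if g j = c then E j j else 0 : ℝ) : ℂ) • B c
          = (E j j : ℂ) • B (g j) := by
        have : ∀ c, ((if g j = c then E j j else 0 : ℝ) : ℂ) • B c
            = if g j = c then (E j j : ℂ) • B c else 0 := by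
          intro c; by_cases h : g j = c <;> simp [h]
        rw [Finset.sum_congr rfl fun c _ => this c, Finset.sum_ite_eq]
        simp
      rw [step1]
      have hsets : Finset.univ.filter (fun k => 0 < E j k)
          = Finset.univ.filter (fun k => g k = g j) := by
        refine Finset.filter_congr fun k _ => ?_
        rw [hgg]
        exact ⟨fun h => hsym h, fun h => hsym h⟩
      calc A j = ∑ k, (E j k : ℂ) • A k := hEfix j
        _ = ∑ k ∈ Finset.univ.filter (fun k => 0 < E j k), (E j k : ℂ) • A k := by
            rw [Finset.sum_filter]
            refine Finset.sum_congr rfl fun k _ => ?_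
            by_cases h : 0 < E j k
            · simp [h]
            · have : E j k = 0 := le_antisymm (not_lt.1 h) (hEst.1 j k)
              simp [h, this]
        _ = ∑ k ∈ Finset.univ.filter (fun k => g k = g j), (E j j : ℂ) • A k := by
            rw [← hsets]
            refine Finset.sum_congr rfl fun k hk => ?_
            have hk' := (Finset.mem_filter.1 hk).2
            rw [Eval hEst hEE hrow hk']
        _ = (E j j : ℂ) • B (g j) := by
            rw [hBdef, Finset.smul_sum]
  -- apply minimal sufficiency
  obtain ⟨f, hfrel⟩ := hms (Fin n) inferInstance B ⟨hBpos, hBsum⟩ ⟨hPPBA, hPPAB⟩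
  have hsurj : Function.Surjective f := by
    intro k
    by_contra hcon
    push_neg at hcon
    apply hnv k
    rw [hfrel k]
    rw [Finset.filter_false_of_mem fun c _ => hcon c]
    exact Finset.sum_empty
  have hcard := Fintype.card_le_of_surjective f hsurj
  rw [Fintype.card_fin] at hcard
  omega

end MainLemmas

end Stmt9

/-- A non-vanishing observable `A` is minimally sufficient iff every
stochastic matrix `p` with `A^p = A` is the identity matrix. -/
theorem stmt_9 {H : Type*}
    [NormedAddCommGroup H] [InnerProductSpace ℂ H] [FiniteDimensional ℂ H]
    {Ω : Type*} [Fintype Ω] [DecidableEq Ω]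
    (A : Ω → H →ₗ[ℂ] H) (hA : IsPOVM A) (hnv : ∀ j, A j ≠ 0) :
    MinSufficient A ↔
      ∀ p : Ω → Ω → ℝ, (∀ i j, 0 ≤ p i j) → (∀ j, ∑ i, p i j = 1) →
        (∀ i, A i = ∑ j, (p i j : ℂ) • A j) →
        ∀ i j, p i j = if i = j then 1 else 0 := by
  constructor
  · intro hms p hp0 hp1 hfix
    exact Stmt9.id_of_minSuff A hA hnv hms p hp0 hp1 hfix
  · intro hid
    exact Stmt9.minSuff_of_id A hid
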